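/- A 2-step memory scheme separates the hypotheses even against an adaptive adversary: In the erasure example with transmitter input pair P_{X_1X_2}(0,0) = P_{X_1X_2}(1,1) = 1/2, let the adversary under H1 choose a pair (s̄,σ) where s̄ ∈ {0,1} is the first-letter state and σ : {0,1,e} → {0,1} selects the second-letter state as a function of the first output, inducing W̄²((y_1,y_2)|(x_1,x_2),(s̄,σ)) = W̄(y_1|x_1,s̄)·W̄(y_2|x_2,σ(y_1)). Then for p ∈ (0,1), r ∈ (0,1) and any distribution P_{S̄,σ} on {0,1} × {0,1,e}→{0,1}, the induced double-letter output distribution Q̄_{Y_1Y_2} differs from the H0 double-letter output distribution Q_{Y_1Y_2}: matching the Y_1-marginal forces P_{S̄} to be uniform, and then Q̄_{Y_1Y_2}(0,1) > 0 = Q_{Y_1Y_2}(0,1). Hence the sets of double-letter output distributions under H0 and H1 (with feedback-adaptive adversary) are disjoint. -/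

import Mathlib

open Finset

/-- `p` is a probability mass function. -/
def IsDist {Z : Type*} [Fintype Z] (p : Z → ℝ) : Prop :=
  (∀ z, 0 ≤ p z) ∧ ∑ z, p z = 1

/-- The output alphabet `{0, 1, e}` of the erasure example. -/
inductive Out : Type
  | o0 | o1 | oe
deriving DecidableEq

instance : Fintype Out where
  elems := {Out.o0, Out.o1, Out.oe}
  complete := by intro x; cases x <;> simp

/-- The binary erasure channel `BEC(p)`: `W(x|x) = 1-p`, `W(e|x) = p`
(inputs `false = 0`, `true = 1`). -/
noncomputable def Wbec (p : ℝ) : Bool → Out → ℝ :=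
  fun x y =>
    match x, y with
    | false, Out.o0 => 1 - p
    | false, Out.o1 => 0
    | false, Out.oe => p
    | true,  Out.o0 => 0
    | true,  Out.o1 => 1 - p
    | true,  Out.oe => p

/-- The state-dependent channel `W̄(·|·,s̄)` of the erasure example (states
`false = 0`, `true = 1`): `W̄(·|·,0)` transmits input `1` cleanly (up to erasure) and
flips input `0` to `1` with probability `(1-p)r`; `W̄(·|·,1)` is symmetric. -/
noncomputable def WbarEx (p r : ℝ) : Bool → Bool → Out → ℝ :=
  fun x s y =>
    match x, s, y with
    | false, false, Out.o0 => (1 - p) * (1 - r)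
    | false, false, Out.o1 => (1 - p) * r
    | false, false, Out.oe => p
    | true,  false, Out.o0 => 0
    | true,  false, Out.o1 => 1 - p
    | true,  false, Out.oe => p
    | false, true,  Out.o0 => 1 - p
    | false, true,  Out.o1 => 0
    | false, true,  Out.oe => p
    | true,  true,  Out.o0 => (1 - p) * r
    | true,  true,  Out.o1 => (1 - p) * (1 - r)
    | true,  true,  Out.oe => p

/-- The double-letter output distribution under `H0` when the transmitter sends the pair
`(X₁,X₂)` with `P(0,0) = P(1,1) = 1/2`. -/
noncomputable def Q2 (p : ℝ) (y : Out × Out) : ℝ :=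
  ∑ x : Bool, (1/2 : ℝ) * Wbec p x y.1 * Wbec p x y.2

/-- The double-letter output distribution under `H1` when the feedback-adaptive adversary
chooses a pair `(s̄, σ)` -- a first-letter state `s̄` and a map `σ` selecting the
second-letter state as a function of the first output -- according to `P`. -/
noncomputable def Qbar2ad (p r : ℝ) (P : Bool × (Out → Bool) → ℝ) (y : Out × Out) : ℝ :=
  ∑ x : Bool, (1/2 : ℝ) *
    ∑ g : Bool × (Out → Bool), P g * WbarEx p r x g.1 y.1 * WbarEx p r x (g.2 y.1) y.2


private lemma sumOut (f : Out → ℝ) : ∑ y, f y = f Out.o0 + f Out.o1 + f Out.oe := by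
  have : (univ : Finset Out) = {Out.o0, Out.o1, Out.oe} := by decide
  rw [this]; simp [Finset.sum_insert, Finset.mem_insert]; ring

private lemma Wbar_nonneg {p r : ℝ} (hp : p ∈ Set.Ioo (0:ℝ) 1) (hr : r ∈ Set.Ioo (0:ℝ) 1)
    (x s : Bool) (y : Out) : 0 ≤ WbarEx p r x s y := by
  obtain ⟨hp0, hp1⟩ := hp; obtain ⟨hr0, hr1⟩ := hr
  cases x <;> cases s <;> cases y <;> simp [WbarEx] <;> nlinarith

private lemma Wbar_sum (p r : ℝ) (x s : Bool) :
    WbarEx p r x s Out.o0 + WbarEx p r x s Out.o1 + WbarEx p r x s Out.oe = 1 := by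
  cases x <;> cases s <;> simp [WbarEx] <;> ring

private lemma sum_fst (P : Bool × (Out → Bool) → ℝ) (c : Bool → ℝ) :
    ∑ g : Bool × (Out → Bool), P g * c g.1 =
      (∑ σ : Out → Bool, P (false, σ)) * c false +
      (∑ σ : Out → Bool, P (true, σ)) * c true := by
  rw [Fintype.sum_prod_type, Fintype.sum_bool]
  simp [Finset.sum_mul]
  ring

private lemma filter_fst (P : Bool × (Out → Bool) → ℝ) :
    (∑ g ∈ Finset.univ.filter (fun g : Bool × (Out → Bool) => g.1 = false), P g)
      = ∑ σ : Out → Bool, P (false, σ) := by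
  rw [Finset.sum_filter, Fintype.sum_prod_type, Fintype.sum_bool]
  simp

private lemma Qbar_marginal (p r : ℝ) (P : Bool × (Out → Bool) → ℝ) (y1 : Out) :
    ∑ y2, Qbar2ad p r P (y1, y2) =
      ∑ x : Bool, (1/2 : ℝ) * ∑ g : Bool × (Out → Bool), P g * WbarEx p r x g.1 y1 := by
  rw [sumOut]
  simp only [Qbar2ad]
  rw [← Finset.sum_add_distrib, ← Finset.sum_add_distrib]
  refine Finset.sum_congr rfl fun x _ => ?_
  rw [← mul_add, ← mul_add, ← Finset.sum_add_distrib, ← Finset.sum_add_distrib]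
  congr 1
  refine Finset.sum_congr rfl fun g _ => ?_
  linear_combination (P g * WbarEx p r x g.1 y1) * Wbar_sum p r x (g.2 y1)

/-- A 2-step memory scheme separates the hypotheses even against an adaptive adversary:
for every distribution `P_{S̄,σ}` on adaptive strategies, the induced double-letter
output distribution under `H1` differs from the one under `H0`; specifically, matching
the `Y₁`-marginal forces `P_{S̄}` to be uniform, and then `Q̄(0,1) > 0 = Q(0,1)`.  Hence
the sets of double-letter output distributions under the two hypotheses are disjoint. -/
theorem two_step_memory_separates_adaptive
    (p r : ℝ) (hp : p ∈ Set.Ioo (0:ℝ) 1) (hr : r ∈ Set.Ioo (0:ℝ) 1) :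
    (∀ P : Bool × (Out → Bool) → ℝ, IsDist P → Qbar2ad p r P ≠ Q2 p) ∧
    Q2 p (Out.o0, Out.o1) = 0 ∧
    (∀ P : Bool × (Out → Bool) → ℝ, IsDist P →
      (∀ y1 : Out, (∑ y2, Qbar2ad p r P (y1, y2)) = ∑ y2, Q2 p (y1, y2)) →
        (∑ g ∈ Finset.univ.filter (fun g : Bool × (Out → Bool) => g.1 = false), P g)
            = 1/2 ∧
          0 < Qbar2ad p r P (Out.o0, Out.o1)) := by
  obtain ⟨hp0, hp1⟩ := hp
  obtain ⟨hr0, hr1⟩ := hr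
  have h1p : (0:ℝ) < 1 - p := by linarith
  have h2 : Q2 p (Out.o0, Out.o1) = 0 := by
    simp [Q2, Wbec, Fintype.sum_bool]
  have h3 : ∀ P : Bool × (Out → Bool) → ℝ, IsDist P →
      (∀ y1 : Out, (∑ y2, Qbar2ad p r P (y1, y2)) = ∑ y2, Q2 p (y1, y2)) →
        (∑ g ∈ Finset.univ.filter (fun g : Bool × (Out → Bool) => g.1 = false), P g)
            = 1/2 ∧
          0 < Qbar2ad p r P (Out.o0, Out.o1) := by
    intro P hP hm
    set AA := ∑ σ : Out → Bool, P (false, σ) with hAA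
    set BB := ∑ σ : Out → Bool, P (true, σ) with hBB
    have hAB : AA + BB = 1 := by
      rw [hAA, hBB, ← hP.2, Fintype.sum_prod_type, Fintype.sum_bool]; ring
    have h0 := hm Out.o0
    rw [Qbar_marginal] at h0
    rw [Fintype.sum_bool, sum_fst P (fun s => WbarEx p r true s Out.o0),
      sum_fst P (fun s => WbarEx p r false s Out.o0)] at h0
    rw [sumOut (fun y2 => Q2 p (Out.o0, y2))] at h0
    simp only [Q2, Fintype.sum_bool, Wbec, WbarEx, ← hAA, ← hBB] at h0
    -- h0 is now a polynomial identity in AA, BB, p, r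
    have e2 : AA * (1 - r) + BB + BB * r = 1 := by
      have e1 : (1 - p) * (AA * (1 - r) + BB + BB * r) = (1 - p) * 1 := by
        linear_combination 2 * h0
      exact mul_left_cancel₀ (ne_of_gt h1p) e1
    have e3 : r * (BB - AA) = 0 := by linear_combination e2 - hAB
    have e4 : BB = AA := by
      have := mul_eq_zero.mp e3
      rcases this with h | h
      · exact absurd h (ne_of_gt hr0)
      · linarith
    have hAhalf : AA = 1/2 := by linarith
    constructor
    · rw [filter_fst]; linarith
    · -- find a strategy with first state `true` of positive probability
      have hBBhalf : BB = 1/2 := by linarith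
      obtain ⟨σ0, hσ0⟩ := Finset.exists_lt_of_sum_lt
        (show ∑ _σ : Out → Bool, (0:ℝ) < ∑ σ : Out → Bool, P (true, σ) by
          rw [← hBB, hBBhalf]; simp)
      have tnonneg : ∀ x : Bool, ∀ g : Bool × (Out → Bool),
          0 ≤ P g * WbarEx p r x g.1 Out.o0 * WbarEx p r x (g.2 Out.o0) Out.o1 := by
        intro x g
        exact mul_nonneg (mul_nonneg (hP.1 g) (Wbar_nonneg ⟨hp0, hp1⟩ ⟨hr0, hr1⟩ _ _ _))
          (Wbar_nonneg ⟨hp0, hp1⟩ ⟨hr0, hr1⟩ _ _ _)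
      have hterm : 0 < P (true, σ0) * WbarEx p r true true Out.o0
          * WbarEx p r true (σ0 Out.o0) Out.o1 := by
        have hw1 : WbarEx p r true true Out.o0 = (1 - p) * r := rfl
        have hpos1 : (0:ℝ) < WbarEx p r true true Out.o0 := by
          rw [hw1]; positivity
        have hpos2 : (0:ℝ) < WbarEx p r true (σ0 Out.o0) Out.o1 := by
          cases hs : σ0 Out.o0 <;> simp [WbarEx] <;> nlinarith
        exact mul_pos (mul_pos hσ0.2 hpos1) hpos2
      have hS : 0 < ∑ g : Bool × (Out → Bool),
          P g * WbarEx p r true g.1 Out.o0 * WbarEx p r true (g.2 Out.o0) Out.o1 := by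
        have := Finset.single_le_sum (f := fun g : Bool × (Out → Bool) =>
          P g * WbarEx p r true g.1 Out.o0 * WbarEx p r true (g.2 Out.o0) Out.o1)
          (fun g _ => tnonneg true g) (Finset.mem_univ ((true, σ0)))
        calc (0:ℝ) < _ := hterm
          _ ≤ _ := this
      have hSf : 0 ≤ ∑ g : Bool × (Out → Bool),
          P g * WbarEx p r false g.1 Out.o0 * WbarEx p r false (g.2 Out.o0) Out.o1 :=
        Finset.sum_nonneg fun g _ => tnonneg false g
      rw [Qbar2ad, Fintype.sum_bool]
      nlinarith
  refine ⟨fun P hP heq => ?_, h2, h3⟩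
  have hpos := (h3 P hP (fun y1 => by rw [heq])).2
  rw [heq, h2] at hpos
  exact lt_irrefl 0 hpos
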